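/- The maximum-likelihood estimate of the noise-free mean parameter: given complex observations q₁,…,q_N and the model ln P(q_n | q_{n−1}; ℓ, v) = −|q_n − (1−ℓ)q_{n−1}|²/(ℓ²v) − ln(π ℓ² v) for n ≥ 2, the stationary points of the log-likelihood in ℓ satisfy the quadratic equation (N−1)·v·ℓ² + K₁·ℓ + K₀ = 0, where K₁ = Σ_{n=2}^N (|q_{n−1}|² − Re(q_{n−1}* q_n)) and K₀ = −Σ_{n=2}^N |q_n − q_{n−1}|². -/

import Mathlib

open scoped BigOperators

/-- for the log-likelihood
`f(ℓ) = Σ_{n=2}^N [−|q_n −(1−ℓ)q_{n−1}|²/(ℓ²v) − 2 ln ℓ]` with `ℓ ∈ (0,1]`,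
`v > 0`, any stationary point of `f` satisfies the quadratic equation
`(N−1)·v·ℓ² + K₁·ℓ + K₀ = 0`, where
`K₁ = Σ_{n=2}^N (|q_{n−1}|² − Re(q_{n−1}* q_n))` and
`K₀ = −Σ_{n=2}^N |q_n − q_{n−1}|²`. -/
theorem ar1_ml_stationary_points (N : ℕ) (hN : 2 ≤ N) (q : ℕ → ℂ)
    (v : ℝ) (hv : 0 < v) (ℓ : ℝ) (hℓ0 : 0 < ℓ) (hℓ1 : ℓ ≤ 1) :
    ∀ y : ℝ,
      HasDerivAt (fun t : ℝ => ∑ n ∈ Finset.Icc 2 N,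
          (-(‖q n - (1 - (t : ℂ)) * q (n - 1)‖)^2 / (t^2 * v)
            - 2 * Real.log t)) y ℓ →
      y = 0 →
      ((N : ℝ) - 1) * v * ℓ^2
        + (∑ n ∈ Finset.Icc 2 N,
            ((‖q (n - 1)‖)^2 - ((starRingEnd ℂ) (q (n - 1)) * q n).re)) * ℓ
        + (-∑ n ∈ Finset.Icc 2 N, (‖q n - q (n - 1)‖)^2) = 0 := by
  intro y hy hy0
  set A : ℕ → ℝ := fun n => (‖q n - q (n-1)‖)^2 with hA
  set B : ℕ → ℝ := fun n => ((starRingEnd ℂ) (q (n-1)) * q n).re - (‖q (n-1)‖)^2 with hB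
  set C : ℕ → ℝ := fun n => (‖q (n-1)‖)^2 with hC
  have key : ∀ n, ∀ t : ℝ, (‖q n - (1 - (t:ℝ) : ℂ) * q (n-1)‖)^2
      = A n + 2 * B n * t + C n * t^2 := by
    intro n t
    simp only [hA, hB, hC, Complex.sq_norm, Complex.normSq_apply, Complex.sub_re, Complex.sub_im,
      Complex.mul_re, Complex.mul_im, Complex.one_re, Complex.one_im, Complex.ofReal_re,
      Complex.ofReal_im, Complex.conj_re, Complex.conj_im]
    ring
  have hℓne : ℓ ≠ 0 := hℓ0.ne'
  have hwne : ℓ^2 * v ≠ 0 := by positivity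
  have hD : HasDerivAt (fun t : ℝ => ∑ n ∈ Finset.Icc 2 N,
      (-(‖q n - (1 - (t : ℂ)) * q (n - 1)‖)^2 / (t^2 * v)
        - 2 * Real.log t))
      (∑ n ∈ Finset.Icc 2 N, ((2 * A n + 2 * B n * ℓ)/(ℓ^3 * v) - 2/ℓ)) ℓ := by
    apply HasDerivAt.fun_sum
    intro n _
    have heq : (fun t : ℝ => -(‖q n - (1 - (t : ℂ)) * q (n - 1)‖)^2 / (t^2 * v)
        - 2 * Real.log t)
        = fun t : ℝ => -(A n + 2 * B n * t + C n * t^2) / (t^2 * v) - 2 * Real.log t := by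
      funext t
      rw [key n t]
    rw [heq]
    have hu : HasDerivAt (fun t : ℝ => -(A n + 2 * B n * t + C n * t^2))
        (-(2 * B n + C n * (2 * ℓ^1))) ℓ := by
      have h := (((hasDerivAt_id ℓ).const_mul (2 * B n)).const_add (A n)).fun_add
        ((hasDerivAt_pow 2 ℓ).const_mul (C n))
      simpa [mul_comm] using h.fun_neg
    have hw : HasDerivAt (fun t : ℝ => t^2 * v) ((2 * ℓ^1) * v) ℓ :=
      (hasDerivAt_pow 2 ℓ).mul_const v
    have hlog : HasDerivAt (fun t : ℝ => 2 * Real.log t) (2 * ℓ⁻¹) ℓ :=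
      (Real.hasDerivAt_log hℓne).const_mul 2
    have h2 := (hu.fun_div hw hwne).fun_sub hlog
    convert h2 using 1
    field_simp
    ring
  have hyD : y = ∑ n ∈ Finset.Icc 2 N, ((2 * A n + 2 * B n * ℓ)/(ℓ^3 * v) - 2/ℓ) :=
    hy.unique hD
  rw [hy0] at hyD
  have hcard : ((Finset.Icc 2 N).card : ℝ) = (N : ℝ) - 1 := by
    rw [Nat.card_Icc]
    have : N + 1 - 2 = N - 1 := by omega
    rw [this]
    push_cast [Nat.cast_sub (by omega : 1 ≤ N)]
    ring
  set SA := ∑ n ∈ Finset.Icc 2 N, A n with hSA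
  set SB := ∑ n ∈ Finset.Icc 2 N, B n with hSB
  have e : ∑ n ∈ Finset.Icc 2 N, ((2 * A n + 2 * B n * ℓ)/(ℓ^3 * v) - 2/ℓ)
      = (2 * SA + 2 * SB * ℓ)/(ℓ^3 * v) - ((N : ℝ) - 1) * (2/ℓ) := by
    rw [Finset.sum_sub_distrib, Finset.sum_const, nsmul_eq_mul, hcard, ← Finset.sum_div]
    congr 2
    rw [Finset.sum_add_distrib, ← Finset.mul_sum, ← Finset.sum_mul, ← Finset.mul_sum]
  rw [e] at hyD
  have h3 : (2 * SA + 2 * SB * ℓ) / (ℓ^3 * v) - ((N:ℝ) - 1) * (2/ℓ) = 0 := by linarith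
  have hK1 : (∑ n ∈ Finset.Icc 2 N,
      ((‖q (n - 1)‖)^2 - ((starRingEnd ℂ) (q (n - 1)) * q n).re))
      = -SB := by
    rw [hSB, ← Finset.sum_neg_distrib]
    apply Finset.sum_congr rfl
    intro n _
    simp [hB]
  have hK0 : (∑ n ∈ Finset.Icc 2 N, (‖q n - q (n - 1)‖)^2) = SA := rfl
  rw [hK1]
  have hv' : v ≠ 0 := hv.ne'
  field_simp at h3
  nlinarith [h3, sq_nonneg ℓ]
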